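/- Let n and d be odd positive integers with d ≤ n. Then hmin(n, d) ≥ ((d+1)/2) · max{ (n+1)/(2d), 1 }, i.e., every approving configuration with parameters (n, d, h) satisfies both 2h ≥ d+1 and 4dh ≥ (n+1)(d+1). -/

import Mathlib

open Finset
open scoped Classical

/-- The closed neighborhood `N[v] = {v} ∪ N(v)` of a vertex `v` in a simple graph `G`.
A `d`-regular graph with loops is modeled by a simple graph in which every
closed neighborhood has size `d`. -/
noncomputable def closedNbhd {n : ℕ} (G : SimpleGraph (Fin n)) (v : Fin n) : Finset (Fin n) :=
  Finset.univ.filter fun u => u = v ∨ G.Adj v u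

/-- A configuration with parameters `(n, d, h)`: a simple graph `G` on `n` vertices all
of whose closed neighborhoods have size `d` (i.e. a `d`-regular graph with loops),
together with an opinion function `f : V → {1, -1}` having exactly `h` happy vertices. -/
def IsConfig {n : ℕ} (d h : ℕ) (G : SimpleGraph (Fin n)) (f : Fin n → ℤ) : Prop :=
  (∀ v, (closedNbhd G v).card = d) ∧ (∀ v, f v = 1 ∨ f v = -1) ∧
  (Finset.univ.filter fun v => f v = 1).card = h

/-- The number of proponents: vertices `v` with `∑_{u ∈ N[v]} f u ≥ 1`. -/
noncomputable def numProponents {n : ℕ} (G : SimpleGraph (Fin n)) (f : Fin n → ℤ) : ℕ :=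
  (Finset.univ.filter fun v => 1 ≤ ∑ u ∈ closedNbhd G v, f u).card

/-- A configuration is approving if more than `n/2` of its vertices are proponents. -/
def IsApproving {n : ℕ} (G : SimpleGraph (Fin n)) (f : Fin n → ℤ) : Prop :=
  2 * numProponents G f > n

/-- `hmin n d`: the least `h` for which an approving configuration with parameters
`(n, d, h)` exists. -/
noncomputable def hmin (n d : ℕ) : ℕ :=
  sInf {h : ℕ | ∃ (G : SimpleGraph (Fin n)) (f : Fin n → ℤ), IsConfig d h G f ∧ IsApproving G f}

/-- `hmax n d`: the greatest `h ≤ n` for which a disapproving configuration with parameters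
`(n, d, h)` exists. -/
noncomputable def hmax (n d : ℕ) : ℕ :=
  sSup {h : ℕ | h ≤ n ∧
    ∃ (G : SimpleGraph (Fin n)) (f : Fin n → ℤ), IsConfig d h G f ∧ ¬ IsApproving G f}

/-- `hminN n`: the minimum of `hmin n d` over odd `d` with `1 ≤ d ≤ n`. -/
noncomputable def hminN (n : ℕ) : ℕ :=
  sInf {m : ℕ | ∃ d : ℕ, Odd d ∧ 1 ≤ d ∧ d ≤ n ∧ m = hmin n d}


lemma mod3' (m c : ℕ) (hc : c < 3*(m+1)) :
    c % (m+1) = c ∨ c % (m+1) + (m+1) = c ∨ c % (m+1) + 2*(m+1) = c := by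
  rcases Nat.lt_or_ge c (m+1) with h1 | h1
  · left; exact Nat.mod_eq_of_lt h1
  rcases Nat.lt_or_ge c (2*(m+1)) with h2 | h2
  · right; left
    rw [Nat.mod_eq_sub_mod h1, Nat.mod_eq_of_lt (by omega)]; omega
  · right; right
    rw [Nat.mod_eq_sub_mod h1, Nat.mod_eq_sub_mod (by omega), Nat.mod_eq_of_lt (by omega)]
    omega

lemma arith' (m k a b : ℕ) (ha : a ≤ m) (hb : b ≤ m) (hk : 2*k ≤ m) :
    ((b + (m+1-a) + k) % (m+1) < 2*k+1 ↔
     (a + (m+1-b) + k) % (m+1) < 2*k+1) := by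
  have l1 : (b + (m+1-a) + k) % (m+1) < m+1 := Nat.mod_lt _ (by omega)
  have l2 : (a + (m+1-b) + k) % (m+1) < m+1 := Nat.mod_lt _ (by omega)
  have e1 := mod3' m (b + (m+1-a) + k) (by omega)
  have e2 := mod3' m (a + (m+1-b) + k) (by omega)
  rcases e1 with e1|e1|e1 <;> rcases e2 with e2|e2|e2 <;> omega

lemma pointwise' {n d : ℕ} (hnpos : 0 < n) (h : ℕ) (G : SimpleGraph (Fin n)) (f : Fin n → ℤ)
    (cfg : IsConfig d h G f) (app : IsApproving G f) :
    2 * h ≥ d + 1 ∧ 4 * d * h ≥ (n + 1) * (d + 1) := by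
  obtain ⟨hreg, hpm, hcard⟩ := cfg
  have hfil : ∀ (s : Finset (Fin n)),
      ∑ u ∈ s, f u = (s.filter fun u => f u = 1).card - ((s.filter fun u => ¬ f u = 1).card : ℤ) := by
    intro s
    rw [← Finset.sum_filter_add_sum_filter_not s (fun u => f u = 1)]
    have h1 : ∑ u ∈ s.filter (fun u => f u = 1), f u = ((s.filter fun u => f u = 1).card : ℤ) := by
      rw [Finset.sum_congr rfl (fun u hu => (Finset.mem_filter.1 hu).2)]
      simp
    have h2 : ∑ u ∈ s.filter (fun u => ¬ f u = 1), f u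
        = -(((s.filter fun u => ¬ f u = 1).card : ℤ)) := by
      have hall : ∀ u ∈ s.filter (fun u => ¬ f u = 1), f u = -1 := by
        intro u hu
        rcases hpm u with h | h
        · exact absurd h (Finset.mem_filter.1 hu).2
        · exact h
      rw [Finset.sum_congr rfl hall, Finset.sum_const]
      simp
    rw [h1, h2]; ring
  -- local bound
  have hp1 : 1 ≤ numProponents G f := by
    unfold IsApproving at app; omega
  obtain ⟨v, hv⟩ := Finset.card_pos.1 hp1
  have hv1 : 1 ≤ ∑ u ∈ closedNbhd G v, f u := (Finset.mem_filter.1 hv).2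
  have hsplit := Finset.card_filter_add_card_filter_not (s := closedNbhd G v)
    (p := fun u => f u = 1)
  have hAh : ((closedNbhd G v).filter fun u => f u = 1).card ≤ h := by
    rw [← hcard]
    exact Finset.card_le_card (Finset.filter_subset_filter _ (Finset.subset_univ _))
  have hloc : 2 * h ≥ d + 1 := by
    rw [hfil] at hv1
    rw [hreg v] at hsplit
    omega
  -- global bound
  refine ⟨hloc, ?_⟩
  set p := numProponents G f with hp
  have happ : 2 * p > n := app
  have hS1 : ∑ v, ∑ u ∈ closedNbhd G v, f u = (d : ℤ) * (2 * h - n) := by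
    have hswap : ∑ v, ∑ u ∈ closedNbhd G v, f u = ∑ u, (d : ℤ) * f u := by
      simp only [closedNbhd, Finset.sum_filter]
      rw [Finset.sum_comm]
      refine Finset.sum_congr rfl fun u _ => ?_
      have : ∑ v : Fin n, (if u = v ∨ G.Adj v u then f u else 0)
          = ∑ v ∈ Finset.univ.filter (fun v => v = u ∨ G.Adj u v), f u := by
        rw [Finset.sum_filter]
        refine Finset.sum_congr rfl fun v _ => ?_
        congr 1
        simp only [eq_iff_iff]
        constructor
        · rintro (rfl | hA); · exact Or.inl rfl
          · exact Or.inr hA.symm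
        · rintro (rfl | hA); · exact Or.inl rfl
          · exact Or.inr hA.symm
      rw [this]
      have : (Finset.univ.filter (fun v => v = u ∨ G.Adj u v)) = closedNbhd G u := rfl
      rw [this, Finset.sum_const, hreg u]
      simp [mul_comm]
    rw [hswap, ← Finset.mul_sum]
    congr 1
    rw [hfil Finset.univ, hcard]
    have := Finset.card_filter_add_card_filter_not (s := (Finset.univ : Finset (Fin n)))
      (p := fun u => f u = 1)
    rw [hcard] at this
    simp only [Finset.card_univ, Fintype.card_fin] at this
    push_cast
    omega
  have hple : p ≤ n := by
    rw [hp]; unfold numProponents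
    exact (Finset.card_filter_le _ _).trans (by simp)
  have hS2 : ∑ v, ∑ u ∈ closedNbhd G v, f u ≥ (p : ℤ) - d * ((n : ℤ) - p) := by
    rw [← Finset.sum_filter_add_sum_filter_not Finset.univ
      (fun v => 1 ≤ ∑ u ∈ closedNbhd G v, f u)]
    have hb1 : ((p : ℤ)) ≤ ∑ v ∈ Finset.univ.filter (fun v => 1 ≤ ∑ u ∈ closedNbhd G v, f u),
        ∑ u ∈ closedNbhd G v, f u := by
      calc ((p : ℤ)) = ∑ v ∈ Finset.univ.filter (fun v => 1 ≤ ∑ u ∈ closedNbhd G v, f u),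
          (1 : ℤ) := by rw [Finset.sum_const]; simp [hp, numProponents]
        _ ≤ _ := Finset.sum_le_sum fun v hv => (Finset.mem_filter.1 hv).2
    have hb2 : -(((n : ℤ) - p) * d) ≤ ∑ v ∈ Finset.univ.filter
        (fun v => ¬ 1 ≤ ∑ u ∈ closedNbhd G v, f u), ∑ u ∈ closedNbhd G v, f u := by
      have hcard2 : (Finset.univ.filter
          (fun v => ¬ 1 ≤ ∑ u ∈ closedNbhd G v, f u)).card = n - p := by
        have := Finset.card_filter_add_card_filter_not
          (s := (Finset.univ : Finset (Fin n))) (p := fun v => 1 ≤ ∑ u ∈ closedNbhd G v, f u)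
        simp only [Finset.card_univ, Fintype.card_fin] at this
        have hpdef : (Finset.univ.filter (fun v => 1 ≤ ∑ u ∈ closedNbhd G v, f u)).card = p := rfl
        omega
      calc -(((n : ℤ) - p) * d)
          = ∑ v ∈ Finset.univ.filter (fun v => ¬ 1 ≤ ∑ u ∈ closedNbhd G v, f u), (-(d : ℤ)) := by
            rw [Finset.sum_const, hcard2, nsmul_eq_mul, Nat.cast_sub hple]
            ring
        _ ≤ _ := by
            refine Finset.sum_le_sum fun v _ => ?_
            calc (-(d : ℤ)) = ∑ u ∈ closedNbhd G v, (-1 : ℤ) := by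
                  rw [Finset.sum_const, hreg v]; simp
              _ ≤ _ := Finset.sum_le_sum fun u _ => by
                  rcases hpm u with h | h <;> rw [h] <;> norm_num
    linarith
  rw [hS1] at hS2
  have h2p : (n : ℤ) + 1 ≤ 2 * p := by exact_mod_cast happ
  have key : 4 * (d : ℤ) * h ≥ ((n : ℤ) + 1) * (d + 1) := by nlinarith [hS2, h2p]
  exact_mod_cast key

lemma exists_good' (m d : ℕ) (hd : Odd d) (hdpos : 0 < d) (hdn : d ≤ m + 1) :
    ∃ (G : SimpleGraph (Fin (m+1))), ∀ v, (closedNbhd G v).card = d := by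
  obtain ⟨k, hk⟩ := hd
  have hkm : 2 * k ≤ m := by omega
  set kF : Fin (m+1) := ⟨k, by omega⟩ with hkF
  have hval : ∀ u w : Fin (m+1), ((w - u) + kF).val
      = (w.val + (m+1 - u.val) + k) % (m+1) := by
    intro u w
    simp [Fin.sub_def, Fin.add_def, hkF]
    congr 1
    omega
  set G : SimpleGraph (Fin (m+1)) :=
    { Adj := fun u w => u ≠ w ∧ ((w - u) + kF).val < d
      symm := by
        constructor
        intro u w ⟨h1, h2⟩
        refine ⟨h1.symm, ?_⟩
        rw [hval] at h2 ⊢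
        rw [hk] at h2 ⊢
        exact (arith' m k w.val u.val (by omega) (by omega) hkm).mpr h2
      loopless := ⟨fun u h => h.1 rfl⟩ } with hG
  refine ⟨G, fun v => ?_⟩
  have hmem : ∀ u, u ∈ closedNbhd G v ↔ ((u - v) + kF).val < d := by
    intro u
    simp only [closedNbhd, Finset.mem_filter, Finset.mem_univ, true_and, hG]
    constructor
    · rintro (rfl | ⟨h1, h2⟩)
      · have : u - u + kF = kF := by abel
        rw [this]; simpa [hkF] using by omega
      · exact h2
    · intro hlt
      by_cases huv : u = v
      · exact Or.inl huv
      · exact Or.inr ⟨Ne.symm huv, hlt⟩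
  have hcast : ∀ j : Fin d, ((Fin.castLE hdn j : Fin (m+1))).val = j.val := fun j => rfl
  have hset : closedNbhd G v = Finset.image (fun j : Fin d => v - kF + Fin.castLE hdn j)
      Finset.univ := by
    ext u
    rw [hmem u, Finset.mem_image]
    constructor
    · intro hlt
      refine ⟨⟨((u - v) + kF).val, hlt⟩, Finset.mem_univ _, ?_⟩
      have : Fin.castLE hdn ⟨((u - v) + kF).val, hlt⟩ = (u - v) + kF := by
        apply Fin.ext
        rw [hcast]
      rw [this]
      abel
    · rintro ⟨j, -, rfl⟩
      have : (v - kF + Fin.castLE hdn j) - v + kF = Fin.castLE hdn j := by abel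
      rw [this, hcast]
      exact j.isLt
  rw [hset, Finset.card_image_of_injective _ (fun j1 j2 hj => by
    have := add_left_cancel hj
    exact Fin.castLE_injective hdn this)]
  simp


/-- `hmin(n,d) ≥ ((d+1)/2)·max{(n+1)/(2d), 1}`, i.e. every approving
configuration satisfies both the local and the global support inequalities. -/
theorem stmt2 (n d : ℕ) (hn : Odd n) (hd : Odd d) (hnpos : 0 < n) (hdpos : 0 < d)
    (hdn : d ≤ n) :
    ((hmin n d : ℚ) ≥ ((d : ℚ) + 1) / 2 * max (((n : ℚ) + 1) / (2 * (d : ℚ))) 1) ∧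
    (∀ (h : ℕ) (G : SimpleGraph (Fin n)) (f : Fin n → ℤ),
      IsConfig d h G f → IsApproving G f →
      2 * h ≥ d + 1 ∧ 4 * d * h ≥ (n + 1) * (d + 1)) := by
  obtain ⟨m, rfl⟩ : ∃ m, n = m + 1 := ⟨n - 1, by omega⟩
  have part2 : ∀ (h : ℕ) (G : SimpleGraph (Fin (m+1))) (f : Fin (m+1) → ℤ),
      IsConfig d h G f → IsApproving G f →
      2 * h ≥ d + 1 ∧ 4 * d * h ≥ (m + 1 + 1) * (d + 1) :=
    fun h G f cfg app => pointwise' hnpos h G f cfg app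
  refine ⟨?_, part2⟩
  obtain ⟨G0, hG0⟩ := exists_good' m d hd hdpos hdn
  have hmem0 : (m+1) ∈ {h : ℕ | ∃ (G : SimpleGraph (Fin (m+1))) (f : Fin (m+1) → ℤ),
      IsConfig d h G f ∧ IsApproving G f} := by
    refine ⟨G0, fun _ => 1, ⟨hG0, fun v => Or.inl rfl, by simp⟩, ?_⟩
    unfold IsApproving numProponents
    have hfe : (Finset.univ.filter fun v : Fin (m+1) =>
        (1:ℤ) ≤ ∑ _u ∈ closedNbhd G0 v, (1:ℤ)) = Finset.univ := by
      apply Finset.filter_true_of_mem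
      intro v _
      rw [Finset.sum_const, hG0 v, nsmul_eq_mul, mul_one]
      exact_mod_cast hdpos
    rw [hfe]
    simp
  have hmin_mem : hmin (m+1) d ∈ {h : ℕ | ∃ (G : SimpleGraph (Fin (m+1))) (f : Fin (m+1) → ℤ),
      IsConfig d h G f ∧ IsApproving G f} := Nat.sInf_mem ⟨m+1, hmem0⟩
  obtain ⟨G, f, cfg, app⟩ := hmin_mem
  obtain ⟨h1, h2⟩ := pointwise' hnpos _ G f cfg app
  have hd0 : (0:ℚ) < d := by exact_mod_cast hdpos
  have h1' : (d:ℚ) + 1 ≤ 2 * (hmin (m+1) d : ℚ) := by exact_mod_cast h1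
  have h2' : ((m:ℚ) + 1 + 1) * (d + 1) ≤ 4 * d * (hmin (m+1) d : ℚ) := by exact_mod_cast h2
  rw [ge_iff_le]
  rcases le_total ((((m:ℚ) + 1) + 1) / (2 * d)) 1 with hc | hc
  · rw [show ((↑(m+1):ℚ) + 1) / (2 * d) = (((m:ℚ) + 1) + 1) / (2 * d) by push_cast; ring,
      max_eq_right hc, mul_one, div_le_iff₀ (by norm_num : (0:ℚ) < 2)]
    linarith
  · rw [show ((↑(m+1):ℚ) + 1) / (2 * d) = (((m:ℚ) + 1) + 1) / (2 * d) by push_cast; ring,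
      max_eq_left hc, div_mul_div_comm, div_le_iff₀ (by positivity)]
    linarith
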